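/- Let P ⊆ ℝⁿ be a Delone set of finite local complexity, let φ : ℝⁿ → ℝⁿ be continuous, let g be an invertible linear map of ℝⁿ, and suppose φ − g is weakly P-equivariant. Then the map sending P − x to φ(P) − g(x) is uniformly continuous with respect to the pattern metric D: for every ε > 0 there exists δ > 0 such that for all x, y ∈ ℝⁿ, D(P − x, P − y) < δ implies D(φ(P) − g(x), φ(P) − g(y)) < ε. -/

import Mathlib

open Metric Set

noncomputable section

/-- Euclidean space ℝⁿ. -/
abbrev Euc (n : ℕ) := EuclideanSpace ℝ (Fin n)

/-- The translate `P - x = {p - x : p ∈ P}`. -/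
def shiftSet {n : ℕ} (P : Set (Euc n)) (x : Euc n) : Set (Euc n) :=
  (fun p => p - x) '' P

/-- The `r`-patch of `P` around `x`: `B_r[P - x] = B(0,r) ∩ (P - x)`. -/
def patch {n : ℕ} (P : Set (Euc n)) (r : ℝ) (x : Euc n) : Set (Euc n) :=
  ball (0 : Euc n) r ∩ shiftSet P x

/-- `P` is uniformly discrete: there is a positive minimal distance between points. -/
def UnifDiscrete {n : ℕ} (P : Set (Euc n)) : Prop :=
  ∃ δ > 0, ∀ p ∈ P, ∀ q ∈ P, p ≠ q → δ ≤ ‖p - q‖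

/-- `P` is relatively dense: every ball of radius `R` contains a point of `P`. -/
def RelDense {n : ℕ} (P : Set (Euc n)) : Prop :=
  ∃ R > 0, ∀ x : Euc n, ∃ p ∈ P, ‖p - x‖ < R

/-- `P` has finite local complexity: for each `r > 0`, only finitely many `r`-patches
around points of `P`. -/
def FLC {n : ℕ} (P : Set (Euc n)) : Prop :=
  ∀ r > 0, {s : Set (Euc n) | ∃ x ∈ P, s = patch P r x}.Finite

/-- `f` is `P`-equivariant with range `R`. -/
def EquivRange {n : ℕ} {F : Type*} (P : Set (Euc n)) (R : ℝ) (f : Euc n → F) : Prop :=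
  ∀ x y : Euc n, patch P R x = patch P R y → f x = f y

/-- `f` is strongly `P`-equivariant: `P`-equivariant with some finite range `R > 0`. -/
def StrongEquiv {n : ℕ} {F : Type*} (P : Set (Euc n)) (f : Euc n → F) : Prop :=
  ∃ R > 0, EquivRange P R f

/-- `f`, viewed as a function on the subset `Q`, is `P`-equivariant with range `R`. -/
def EquivRangeOn {n : ℕ} {F : Type*} (P Q : Set (Euc n)) (R : ℝ) (f : Euc n → F) : Prop :=
  ∀ x ∈ Q, ∀ y ∈ Q, patch P R x = patch P R y → f x = f y

/-- `f`, viewed as a function on the subset `Q`, is strongly `P`-equivariant. -/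
def StrongEquivOn {n : ℕ} {F : Type*} (P Q : Set (Euc n)) (f : Euc n → F) : Prop :=
  ∃ R > 0, EquivRangeOn P Q R f

/-- `Q` is locally derivable from `P`. -/
def LocallyDerivable {n : ℕ} (P Q : Set (Euc n)) : Prop :=
  ∃ R > 0, ∀ x y : Euc n, patch P R x = patch P R y →
    ({0} : Set (Euc n)) ∩ shiftSet Q x = ({0} : Set (Euc n)) ∩ shiftSet Q y

/-- Hypothesis (H): for every `r > 0` there is `r' > 0` such that for all `x`,
`B(φ(x), r) ∩ φ(P) ⊆ φ(B(x, r') ∩ P)`. -/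
def HypoH {n : ℕ} (P : Set (Euc n)) (φ : Euc n → Euc n) : Prop :=
  ∀ r > 0, ∃ r' > 0, ∀ x : Euc n, ball (φ x) r ∩ (φ '' P) ⊆ φ '' (ball x r' ∩ P)

/-- The pattern metric `D` on closed subsets of ℝⁿ. -/
def patternDist {n : ℕ} (A B : Set (Euc n)) : ℝ :=
  sInf {ε : ℝ | 0 < ε ∧ Metric.hausdorffDist
    ((ball (0 : Euc n) (1 / ε) ∩ A) ∪ sphere (0 : Euc n) (1 / ε))
    ((ball (0 : Euc n) (1 / ε) ∩ B) ∪ sphere (0 : Euc n) (1 / ε)) ≤ ε}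

/-- A continuous `f : ℝⁿ → ℝⁿ` is weakly `P`-equivariant if it is uniformly approximated
by strongly `P`-equivariant continuous functions. -/
def WeakEquiv {n : ℕ} (P : Set (Euc n)) (f : Euc n → Euc n) : Prop :=
  ∀ ε > 0, ∃ g : Euc n → Euc n, Continuous g ∧ StrongEquiv P g ∧ ∀ x : Euc n, ‖f x - g x‖ < ε

/-- `P` is aperiodic: the only translation fixing `P` is `0`. -/
def IsAperiodicSet {n : ℕ} (P : Set (Euc n)) : Prop :=
  ∀ x : Euc n, shiftSet P x = P → x = 0



section Aux
variable {n : ℕ}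

lemma mem_shiftSet_iff {P : Set (Euc n)} {x v : Euc n} :
    v ∈ shiftSet P x ↔ ∃ p ∈ P, p - x = v := by
  simp [shiftSet]

lemma mem_patch_iff {P : Set (Euc n)} {r : ℝ} {x v : Euc n} :
    v ∈ patch P r x ↔ ‖v‖ < r ∧ ∃ p ∈ P, p - x = v := by
  simp [patch, mem_shiftSet_iff, mem_ball_zero_iff, shiftSet]

lemma sep_bounded_finite {s : Set (Euc n)} {r δ₀ : ℝ} (hδ : 0 < δ₀)
    (hb : s ⊆ ball 0 r) (hsep : ∀ p ∈ s, ∀ q ∈ s, p ≠ q → δ₀ ≤ ‖p - q‖) :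
    s.Finite := by
  obtain ⟨t, htf, hcov⟩ := totallyBounded_iff.1
    ((isCompact_closedBall (0 : Euc n) r).totallyBounded.subset
      (hb.trans ball_subset_closedBall)) (δ₀ / 2) (by positivity)
  have hsub : s ⊆ ⋃ y ∈ t, s ∩ ball y (δ₀ / 2) := by
    intro p hp
    obtain ⟨y, hy, hpy⟩ := mem_iUnion₂.1 (hcov hp)
    exact mem_iUnion₂.2 ⟨y, hy, hp, hpy⟩
  refine Set.Finite.subset (Set.Finite.biUnion htf fun y _ => ?_) hsub
  refine Set.Subsingleton.finite ?_
  intro p hp q hq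
  by_contra hne
  have h1 := hsep p hp.1 q hq.1 hne
  have h2 : dist p q < δ₀ := by
    calc dist p q ≤ dist p y + dist y q := dist_triangle _ _ _
    _ < δ₀ / 2 + δ₀ / 2 := by
        have := mem_ball.1 hp.2
        have := mem_ball.1 hq.2
        rw [dist_comm y q] at *
        linarith
    _ = δ₀ := by ring
  rw [dist_eq_norm] at h2
  linarith

lemma patch_finite {P : Set (Euc n)} (hUD : UnifDiscrete P) (r : ℝ) (x : Euc n) :
    (patch P r x).Finite := by
  obtain ⟨δ₀, hδ₀, hsep⟩ := hUD
  refine sep_bounded_finite hδ₀ (inter_subset_left) ?_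
  rintro v hv w hw hne
  obtain ⟨-, p, hp, rfl⟩ := mem_patch_iff.1 hv
  obtain ⟨-, q, hq, rfl⟩ := mem_patch_iff.1 hw
  have : p ≠ q := fun h => hne (by rw [h])
  have := hsep p hp q hq this
  have he : p - x - (q - x) = p - q := by abel
  rw [he]
  exact this

lemma finite_minsep {K : Set (Euc n)} (hK : K.Finite) :
    ∃ η > 0, ∀ u ∈ K, ∀ v ∈ K, dist u v < η → u = v := by
  classical
  set D := {d : ℝ | ∃ u ∈ K, ∃ v ∈ K, u ≠ v ∧ d = dist u v} with hD
  have hDfin : D.Finite := by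
    have hsub : D ⊆ (fun p : Euc n × Euc n => dist p.1 p.2) '' (K ×ˢ K) := by
      rintro d ⟨u, hu, v, hv, hne, rfl⟩
      exact ⟨(u, v), ⟨hu, hv⟩, rfl⟩
    exact ((hK.prod hK).image _).subset hsub
  rcases eq_empty_or_nonempty D with hDe | hDne
  · refine ⟨1, one_pos, fun u hu v hv hlt => ?_⟩
    by_contra hne
    exact (eq_empty_iff_forall_notMem.1 hDe (dist u v)) ⟨u, hu, v, hv, hne, rfl⟩
  · refine ⟨sInf D, ?_, ?_⟩
    · obtain ⟨u, hu, v, hv, hne, hd⟩ := hDne.csInf_mem hDfin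
      rw [hd]
      exact dist_pos.2 hne
    · intro u hu v hv hlt
      by_contra hne
      have hmem : dist u v ∈ D := ⟨u, hu, v, hv, hne, rfl⟩
      have := csInf_le hDfin.bddBelow hmem
      linarith

lemma patch_shift_subset {P : Set (Euc n)} {r s : ℝ} {a b : Euc n}
    (h : patch P r a ⊆ patch P r b) (v : Euc n) (hv : ‖v‖ + s ≤ r) :
    patch P s (a + v) ⊆ patch P s (b + v) := by
  intro u hu
  obtain ⟨hus, p, hp, hpu⟩ := mem_patch_iff.1 hu
  have h1 : p - a = u + v := by rw [← hpu]; abel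
  have h2 : u + v ∈ patch P r a := by
    refine mem_patch_iff.2 ⟨?_, p, hp, h1⟩
    calc ‖u + v‖ ≤ ‖u‖ + ‖v‖ := norm_add_le _ _
    _ < s + ‖v‖ := by linarith
    _ ≤ r := by linarith
  obtain ⟨-, q, hq, hqv⟩ := mem_patch_iff.1 (h h2)
  refine mem_patch_iff.2 ⟨hus, q, hq, ?_⟩
  have : q - b = u + v := hqv
  rw [show q - (b + v) = (q - b) - v by abel, this]
  abel

lemma patch_shift {P : Set (Euc n)} {r s : ℝ} {a b : Euc n}
    (h : patch P r a = patch P r b) (v : Euc n) (hv : ‖v‖ + s ≤ r) :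
    patch P s (a + v) = patch P s (b + v) :=
  Set.Subset.antisymm (patch_shift_subset h.le v hv) (patch_shift_subset h.ge v hv)

lemma dist_to_sphere {v : Euc n} {r : ℝ} (hv : 0 < ‖v‖) (hvr : ‖v‖ ≤ r) :
    ∃ w ∈ sphere (0 : Euc n) r, dist v w = r - ‖v‖ := by
  have hr : 0 < r := lt_of_lt_of_le hv hvr
  refine ⟨(r / ‖v‖) • v, ?_, ?_⟩
  · rw [mem_sphere_zero_iff_norm, norm_smul, Real.norm_eq_abs,
      abs_of_pos (by positivity : (0:ℝ) < r / ‖v‖)]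
    field_simp
  · rw [dist_eq_norm]
    have h1 : v - (r / ‖v‖) • v = (1 - r / ‖v‖) • v := by
      rw [sub_smul, one_smul]
    rw [h1, norm_smul, Real.norm_eq_abs]
    have h2 : (1 : ℝ) ≤ r / ‖v‖ := (one_le_div hv).2 hvr
    rw [abs_of_nonpos (by linarith : (1 : ℝ) - r / ‖v‖ ≤ 0)]
    field_simp
    ring

end Aux

section Aux2
variable {n : ℕ}

lemma strongEquiv_bounded {P : Set (Euc n)} {F : Type*} [NormedAddCommGroup F]
    (hRD : RelDense P) (hFLC : FLC P)
    {h : Euc n → F} (hc : Continuous h) {R : ℝ} (hR : 0 < R)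
    (he : EquivRange P R h) : ∃ M, 0 ≤ M ∧ ∀ z, ‖h z‖ ≤ M := by
  classical
  obtain ⟨R₀, hR₀, hdense⟩ := hRD
  set r1 := R + R₀ + 1 with hr1
  have hfin := hFLC r1 (by positivity)
  set rep : Set (Euc n) → Euc n := fun s =>
    if hs : ∃ x ∈ P, s = patch P r1 x then hs.choose else 0 with hrepdef
  have hrep : ∀ s, (∃ x ∈ P, s = patch P r1 x) →
      rep s ∈ P ∧ s = patch P r1 (rep s) := by
    intro s hs
    simp only [hrepdef, dif_pos hs]
    exact ⟨hs.choose_spec.1, hs.choose_spec.2⟩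
  set K' : Set (Euc n) :=
    ⋃ s ∈ {s : Set (Euc n) | ∃ x ∈ P, s = patch P r1 x}, closedBall (rep s) R₀ with hK'
  have hK'c : IsCompact K' :=
    hfin.isCompact_biUnion fun s _ => isCompact_closedBall _ _
  obtain ⟨M, hM⟩ := isBounded_iff_forall_norm_le.1 (hK'c.image hc).isBounded
  refine ⟨max M 0, le_max_right _ _, fun z => ?_⟩
  obtain ⟨p, hp, hpz⟩ := hdense z
  have hsmem : ∃ x ∈ P, patch P r1 p = patch P r1 x := ⟨p, hp, rfl⟩
  obtain ⟨hrepP, hrepEq⟩ := hrep (patch P r1 p) hsmem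
  have hshift : patch P R (p + (z - p)) = patch P R (rep (patch P r1 p) + (z - p)) := by
    refine patch_shift hrepEq (z - p) ?_
    have : ‖z - p‖ < R₀ := by rw [norm_sub_rev]; exact hpz
    simp only [hr1]; linarith
  have hz1 : p + (z - p) = z := by abel
  rw [hz1] at hshift
  have heqz : h z = h (rep (patch P r1 p) + (z - p)) := he _ _ hshift
  have hmem : rep (patch P r1 p) + (z - p) ∈ K' := by
    refine mem_iUnion₂.2 ⟨patch P r1 p, ⟨p, hp, rfl⟩, ?_⟩
    rw [mem_closedBall, dist_eq_norm]
    have : rep (patch P r1 p) + (z - p) - rep (patch P r1 p) = z - p := by abel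
    rw [this, norm_sub_rev]
    exact hpz.le
  rw [heqz]
  exact le_trans (hM _ ⟨_, hmem, rfl⟩) (le_max_left _ _)

lemma one_mem_patternSet (hn : 0 < n) (A B : Set (Euc n)) :
    (1 : ℝ) ∈ {ε : ℝ | 0 < ε ∧ Metric.hausdorffDist
      ((ball (0 : Euc n) (1 / ε) ∩ A) ∪ sphere (0 : Euc n) (1 / ε))
      ((ball (0 : Euc n) (1 / ε) ∩ B) ∪ sphere (0 : Euc n) (1 / ε)) ≤ ε} := by
  haveI : Nonempty (Fin n) := ⟨⟨0, hn⟩⟩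
  obtain ⟨u, hu⟩ := NormedSpace.sphere_nonempty (E := Euc n) (x := 0)
    (r := 1).2 (by norm_num)
  refine ⟨one_pos, ?_⟩
  rw [one_div_one]
  have key : ∀ C : Set (Euc n), ∀ v ∈ (ball (0 : Euc n) 1 ∩ C) ∪ sphere (0 : Euc n) 1,
      ∃ w ∈ sphere (0 : Euc n) 1, dist v w ≤ 1 := by
    intro C v hv
    rcases hv with hv | hv
    · rcases eq_or_ne v 0 with rfl | hv0
      · refine ⟨u, hu, ?_⟩
        rw [dist_comm, dist_zero_right, mem_sphere_zero_iff_norm.1 hu]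
      · obtain ⟨w, hw, hdw⟩ := dist_to_sphere (norm_pos_iff.2 hv0)
          (le_of_lt (by simpa using mem_ball_zero_iff.1 hv.1))
        refine ⟨w, hw, ?_⟩
        rw [hdw]
        have := norm_nonneg v
        norm_num
    · exact ⟨v, hv, by simp⟩
  refine Metric.hausdorffDist_le_of_mem_dist zero_le_one ?_ ?_
  · intro v hv
    obtain ⟨w, hw, hd⟩ := key A v hv
    exact ⟨w, Or.inr hw, hd⟩
  · intro v hv
    obtain ⟨w, hw, hd⟩ := key B v hv
    exact ⟨w, Or.inr hw, hd⟩

end Aux2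

set_option maxHeartbeats 2000000
theorem stmt11 {n : ℕ} (P : Set (Euc n))
    (hUD : UnifDiscrete P) (hRD : RelDense P) (hFLC : FLC P)
    (φ : Euc n → Euc n) (hφ : Continuous φ) (g : Euc n ≃ₗ[ℝ] Euc n)
    (hw : WeakEquiv P (fun x => φ x - g x)) :
    ∀ ε > 0, ∃ δ > 0, ∀ x y : Euc n,
      patternDist (shiftSet P x) (shiftSet P y) < δ →
      patternDist (shiftSet (φ '' P) (g x)) (shiftSet (φ '' P) (g y)) < ε := by
  intro ε hε
  rcases Nat.eq_zero_or_pos n with hn | hn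
  · -- degenerate case n = 0
    subst hn
    refine ⟨1, one_pos, fun x y _ => ?_⟩
    have hall : ∀ a b : Euc 0, a = b := fun a b => PiLp.ext fun i => Fin.elim0 i
    have hxy : g x = g y := hall _ _
    rw [hxy]
    have hmem : ε / 2 ∈ {ε' : ℝ | 0 < ε' ∧ Metric.hausdorffDist
        ((ball (0 : Euc 0) (1 / ε') ∩ shiftSet (φ '' P) (g y)) ∪ sphere (0 : Euc 0) (1 / ε'))
        ((ball (0 : Euc 0) (1 / ε') ∩ shiftSet (φ '' P) (g y)) ∪ sphere (0 : Euc 0) (1 / ε')) ≤ ε'} := by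
      refine ⟨by positivity, ?_⟩
      rw [Metric.hausdorffDist_self_zero]
      positivity
    unfold patternDist
    calc sInf _ ≤ ε / 2 := csInf_le ⟨0, fun t ht => ht.1.le⟩ hmem
    _ < ε := by linarith
  · haveI : Nonempty (Fin n) := ⟨⟨0, hn⟩⟩
    obtain ⟨e, he_def⟩ : ∃ e : ℝ, e = min ε 1 / 2 := ⟨_, rfl⟩
    have hemin : 0 < min ε 1 := lt_min hε one_pos
    have he : 0 < e := by rw [he_def]; linarith
    have heε : e < ε := by have := min_le_left ε 1; rw [he_def]; linarith
    have he1 : e ≤ 1 / 2 := by have := min_le_right ε 1; rw [he_def]; linarith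
    have hinv_e : 2 ≤ 1 / e := by rw [le_div_iff₀ he]; linarith
    obtain ⟨h, hc, ⟨Rh, hRh, heqv⟩, happ0⟩ := hw (e / 4) (by positivity)
    have happ : ∀ z : Euc n, ‖φ z - g z - h z‖ < e / 4 := happ0
    obtain ⟨M, hM0, hM⟩ := strongEquiv_bounded hRD hFLC hc hRh heqv
    obtain ⟨Cg, hCg_def⟩ : ∃ c : ℝ, c = ‖(g.toContinuousLinearEquiv : Euc n →L[ℝ] Euc n)‖ :=
      ⟨_, rfl⟩
    obtain ⟨CG, hCG_def⟩ : ∃ c : ℝ, c = ‖(g.symm.toContinuousLinearEquiv : Euc n →L[ℝ] Euc n)‖ :=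
      ⟨_, rfl⟩
    have hCg0 : 0 ≤ Cg := hCg_def ▸ norm_nonneg _
    have hCG0 : 0 ≤ CG := hCG_def ▸ norm_nonneg _
    have hgle : ∀ z : Euc n, ‖g z‖ ≤ Cg * ‖z‖ := by
      intro z
      have := (g.toContinuousLinearEquiv : Euc n →L[ℝ] Euc n).le_opNorm z
      rw [hCg_def]
      simpa [LinearEquiv.coe_toContinuousLinearEquiv'] using this
    have hgsymm : ∀ z : Euc n, ‖g.symm z‖ ≤ CG * ‖z‖ := by
      intro z
      have := (g.symm.toContinuousLinearEquiv : Euc n →L[ℝ] Euc n).le_opNorm z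
      rw [hCG_def]
      simpa [LinearEquiv.coe_toContinuousLinearEquiv'] using this
    obtain ⟨C, hC_def⟩ : ∃ c : ℝ, c = CG * (1 / e + (M + e / 4)) + 1 := ⟨_, rfl⟩
    have hCaux : 0 ≤ CG * (1 / e + (M + e / 4)) := by positivity
    have hC1 : 1 ≤ C := by rw [hC_def]; linarith
    obtain ⟨R', hR'_def⟩ : ∃ r : ℝ, r = Rh + 1 := ⟨_, rfl⟩
    have hR' : 0 < R' := by rw [hR'_def]; linarith
    obtain ⟨KK, hKK⟩ : ∃ K : Set (Euc n), K = ⋃₀ {s : Set (Euc n) | ∃ x ∈ P, s = patch P R' x} :=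
      ⟨_, rfl⟩
    have hKKfin : KK.Finite := by
      rw [hKK]
      refine Set.Finite.sUnion (hFLC R' hR') ?_
      rintro s ⟨x, hx, rfl⟩
      exact patch_finite hUD R' x
    obtain ⟨η, hη, hηsep⟩ := finite_minsep hKKfin
    have hCR5 : 0 < C + R' + 5 := by linarith
    obtain ⟨δ, hδ_def⟩ :
        ∃ d : ℝ, d = min (min (1 / (C + R' + 5)) (e / (2 * (Cg + 1)))) (min (η / 4) (1 / 2)) :=
      ⟨_, rfl⟩
    have hδpos : 0 < δ := by
      rw [hδ_def]
      refine lt_min (lt_min (by positivity) (by positivity)) (lt_min (by positivity) (by positivity))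
    have hδ1 : C + R' + 5 ≤ 1 / δ := by
      have h1 : δ ≤ 1 / (C + R' + 5) := hδ_def ▸ le_trans (min_le_left _ _) (min_le_left _ _)
      rw [le_div_iff₀ hδpos]
      calc (C + R' + 5) * δ ≤ (C + R' + 5) * (1 / (C + R' + 5)) :=
            mul_le_mul_of_nonneg_left h1 hCR5.le
      _ = 1 := by field_simp
    have hδ2 : Cg * δ ≤ e / 2 := by
      have h1 : δ ≤ e / (2 * (Cg + 1)) := hδ_def ▸ le_trans (min_le_left _ _) (min_le_right _ _)
      calc Cg * δ ≤ (Cg + 1) * (e / (2 * (Cg + 1))) := by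
            apply mul_le_mul (by linarith) h1 hδpos.le (by linarith)
      _ = e / 2 := by field_simp
    have hδ3 : δ ≤ η / 4 := hδ_def ▸ le_trans (min_le_right _ _) (min_le_left _ _)
    have hδ4 : δ ≤ 1 / 2 := hδ_def ▸ le_trans (min_le_right _ _) (min_le_right _ _)
    refine ⟨δ, hδpos, fun x y hD => ?_⟩
    unfold patternDist at hD
    obtain ⟨ε₀, hε₀mem, hε₀δ⟩ := exists_lt_of_csInf_lt
      ⟨1, one_mem_patternSet hn (shiftSet P x) (shiftSet P y)⟩ hD
    obtain ⟨hε₀pos, hHD⟩ := hε₀mem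
    have hε₀inv : 1 / δ < 1 / ε₀ := one_div_lt_one_div_of_lt hε₀pos hε₀δ
    have hrad : C + R' + 5 < 1 / ε₀ := lt_of_le_of_lt hδ1 hε₀inv
    have hSne : ∀ Q : Set (Euc n),
        ((ball (0 : Euc n) (1 / ε₀) ∩ Q) ∪ sphere (0 : Euc n) (1 / ε₀)).Nonempty := by
      intro Q
      obtain ⟨u, hu⟩ := (NormedSpace.sphere_nonempty (E := Euc n) (x := 0) (r := 1 / ε₀)).2
        (by positivity)
      exact ⟨u, Or.inr hu⟩
    have hSbdd : ∀ Q : Set (Euc n), Bornology.IsBounded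
        ((ball (0 : Euc n) (1 / ε₀) ∩ Q) ∪ sphere (0 : Euc n) (1 / ε₀)) := by
      intro Q
      exact ((isBounded_ball).subset inter_subset_left).union isBounded_sphere
    have hedist : ∀ a b : Euc n, EMetric.hausdorffEdist
        ((ball (0 : Euc n) (1 / ε₀) ∩ shiftSet P a) ∪ sphere (0 : Euc n) (1 / ε₀))
        ((ball (0 : Euc n) (1 / ε₀) ∩ shiftSet P b) ∪ sphere (0 : Euc n) (1 / ε₀)) ≠ ⊤ :=
      fun a b => Metric.hausdorffEdist_ne_top_of_nonempty_of_bounded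
        (hSne _) (hSne _) (hSbdd _) (hSbdd _)
    -- the transfer step
    have transfer : ∀ a b : Euc n,
        Metric.hausdorffDist
          ((ball (0 : Euc n) (1 / ε₀) ∩ shiftSet P a) ∪ sphere (0 : Euc n) (1 / ε₀))
          ((ball (0 : Euc n) (1 / ε₀) ∩ shiftSet P b) ∪ sphere (0 : Euc n) (1 / ε₀)) ≤ ε₀ →
        ∀ z ∈ P, ‖z - a‖ ≤ C + R' + 2 → ∃ z' ∈ P, ‖z - a - (z' - b)‖ < δ := by
      intro a b hab z hz hza
      have hmem : z - a ∈ (ball (0 : Euc n) (1 / ε₀) ∩ shiftSet P a)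
          ∪ sphere (0 : Euc n) (1 / ε₀) :=
        Or.inl ⟨mem_ball_zero_iff.2 (lt_of_le_of_lt hza (by linarith)), ⟨z, hz, rfl⟩⟩
      obtain ⟨u, hu, hdu⟩ := Metric.exists_dist_lt_of_hausdorffDist_lt hmem
        (lt_of_le_of_lt hab hε₀δ) (hedist a b)
      rw [dist_eq_norm] at hdu
      rcases hu with hu | hu
      · obtain ⟨z', hz', hz'e⟩ := mem_shiftSet_iff.1 hu.2
        exact ⟨z', hz', by rw [hz'e]; exact hdu⟩
      · exfalso
        have hun : ‖u‖ = 1 / ε₀ := mem_sphere_zero_iff_norm.1 hu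
        have h2 : ‖u‖ - ‖z - a‖ ≤ ‖z - a - u‖ := by
          calc ‖u‖ - ‖z - a‖ ≤ |‖z - a‖ - ‖u‖| := by rw [abs_sub_comm]; exact le_abs_self _
          _ ≤ ‖z - a - u‖ := abs_norm_sub_norm_le _ _
        linarith
    -- the key step
    have key : ∀ a b : Euc n,
        Metric.hausdorffDist
          ((ball (0 : Euc n) (1 / ε₀) ∩ shiftSet P a) ∪ sphere (0 : Euc n) (1 / ε₀))
          ((ball (0 : Euc n) (1 / ε₀) ∩ shiftSet P b) ∪ sphere (0 : Euc n) (1 / ε₀)) ≤ ε₀ →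
        ∀ w ∈ (ball (0 : Euc n) (1 / e) ∩ shiftSet (φ '' P) (g a)) ∪ sphere (0 : Euc n) (1 / e),
        ∃ w' ∈ (ball (0 : Euc n) (1 / e) ∩ shiftSet (φ '' P) (g b)) ∪ sphere (0 : Euc n) (1 / e),
          dist w w' ≤ e := by
      intro a b hab w hw
      have hba : Metric.hausdorffDist
          ((ball (0 : Euc n) (1 / ε₀) ∩ shiftSet P b) ∪ sphere (0 : Euc n) (1 / ε₀))
          ((ball (0 : Euc n) (1 / ε₀) ∩ shiftSet P a) ∪ sphere (0 : Euc n) (1 / ε₀)) ≤ ε₀ := by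
        rw [Metric.hausdorffDist_comm]; exact hab
      rcases hw with hw | hw
      swap
      · exact ⟨w, Or.inr hw, by simp [he.le]⟩
      obtain ⟨t, htP, htw⟩ := mem_shiftSet_iff.1 hw.2
      obtain ⟨p, hp, rfl⟩ := htP
      have hwn : ‖w‖ < 1 / e := mem_ball_zero_iff.1 hw.1
      by_cases hbig : 1 / e - e ≤ ‖w‖
      · have hw0 : 0 < ‖w‖ := by linarith
        obtain ⟨w', hw's, hw'd⟩ := dist_to_sphere hw0 hwn.le
        exact ⟨w', Or.inr hw's, by rw [hw'd]; linarith⟩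
      · push_neg at hbig
        have hψp : ∀ q : Euc n, ‖φ q - g q‖ ≤ M + e / 4 := by
          intro q
          have h1 := happ q
          have h2 := hM q
          calc ‖φ q - g q‖ = ‖φ q - g q - h q + h q‖ := by congr 1; abel
          _ ≤ ‖φ q - g q - h q‖ + ‖h q‖ := norm_add_le _ _
          _ ≤ M + e / 4 := by linarith
        have hga : g (p - a) = w - (φ p - g p) := by
          rw [map_sub, ← htw]; abel
        have hpa : ‖p - a‖ ≤ C := by
          calc ‖p - a‖ = ‖g.symm (g (p - a))‖ := by rw [g.symm_apply_apply]
          _ ≤ CG * ‖g (p - a)‖ := hgsymm _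
          _ ≤ CG * (1 / e + (M + e / 4)) := by
              refine mul_le_mul_of_nonneg_left ?_ hCG0
              rw [hga]
              calc ‖w - (φ p - g p)‖ ≤ ‖w‖ + ‖φ p - g p‖ := norm_sub_le _ _
              _ ≤ 1 / e + (M + e / 4) := by
                  have := hψp p
                  linarith
          _ ≤ C := by linarith
        obtain ⟨p', hp', hpp'⟩ := transfer a b hab p hp (by linarith)
        have hKmem : ∀ q ∈ P, ∀ z ∈ P, ∀ v : Euc n, v = z - q → ‖v‖ < R' → v ∈ KK := by
          intro q hq z hz v hv hvn
          rw [hKK]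
          exact mem_sUnion.2 ⟨patch P R' q, ⟨q, hq, rfl⟩, mem_patch_iff.2 ⟨hvn, z, hz, hv.symm⟩⟩
        have hpatch : patch P Rh p = patch P Rh p' := by
          apply Set.Subset.antisymm
          · intro v hv
            obtain ⟨hvR, q, hq, hqv⟩ := mem_patch_iff.1 hv
            have hqa : ‖q - a‖ ≤ C + R' + 2 := by
              have hqa1 : q - a = v + (p - a) := by rw [← hqv]; abel
              rw [hqa1]
              calc ‖v + (p - a)‖ ≤ ‖v‖ + ‖p - a‖ := norm_add_le _ _
              _ ≤ C + R' + 2 := by linarith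
            obtain ⟨q', hq', hqq'⟩ := transfer a b hab q hq hqa
            have hdiff : ‖v - (q' - p')‖ < 2 * δ := by
              have hident : v - (q' - p') = (q - a - (q' - b)) - (p - a - (p' - b)) := by
                rw [← hqv]; abel
              rw [hident]
              calc ‖(q - a - (q' - b)) - (p - a - (p' - b))‖
                  ≤ ‖q - a - (q' - b)‖ + ‖p - a - (p' - b)‖ := norm_sub_le _ _
              _ < 2 * δ := by linarith
            have hv'n : ‖q' - p'‖ < R' := by
              have h3 : ‖q' - p'‖ ≤ ‖v‖ + ‖v - (q' - p')‖ := by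
                calc ‖q' - p'‖ = ‖v - (v - (q' - p'))‖ := by congr 1; abel
                _ ≤ ‖v‖ + ‖v - (q' - p')‖ := norm_sub_le _ _
              linarith
            have hvK : v ∈ KK := hKmem p hp q hq v hqv.symm
              (lt_of_lt_of_le hvR (by linarith))
            have hv'K : q' - p' ∈ KK := hKmem p' hp' q' hq' _ rfl hv'n
            have heqvv : v = q' - p' := hηsep v hvK _ hv'K
              (by rw [dist_eq_norm]; linarith)
            exact mem_patch_iff.2 ⟨hvR, q', hq', heqvv.symm⟩
          · intro v hv
            obtain ⟨hvR, q', hq', hqv'⟩ := mem_patch_iff.1 hv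
            have hp'b : ‖p' - b‖ ≤ C + δ := by
              have h3 : ‖p' - b‖ ≤ ‖p - a‖ + ‖p - a - (p' - b)‖ := by
                calc ‖p' - b‖ = ‖p - a - (p - a - (p' - b))‖ := by congr 1; abel
                _ ≤ ‖p - a‖ + ‖p - a - (p' - b)‖ := norm_sub_le _ _
              linarith
            have hq'b : ‖q' - b‖ ≤ C + R' + 2 := by
              have hqb1 : q' - b = v + (p' - b) := by rw [← hqv']; abel
              rw [hqb1]
              calc ‖v + (p' - b)‖ ≤ ‖v‖ + ‖p' - b‖ := norm_add_le _ _
              _ ≤ C + R' + 2 := by linarith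
            obtain ⟨q, hq, hqq'⟩ := transfer b a hba q' hq' hq'b
            have hdiff : ‖v - (q - p)‖ < 2 * δ := by
              have hident : v - (q - p) = (q' - b - (q - a)) - (p' - b - (p - a)) := by
                rw [← hqv']; abel
              have hrev : ‖p' - b - (p - a)‖ = ‖p - a - (p' - b)‖ := norm_sub_rev _ _
              rw [hident]
              calc ‖(q' - b - (q - a)) - (p' - b - (p - a))‖
                  ≤ ‖q' - b - (q - a)‖ + ‖p' - b - (p - a)‖ := norm_sub_le _ _
              _ < 2 * δ := by rw [hrev]; linarith
            have hvn' : ‖q - p‖ < R' := by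
              have h3 : ‖q - p‖ ≤ ‖v‖ + ‖v - (q - p)‖ := by
                calc ‖q - p‖ = ‖v - (v - (q - p))‖ := by congr 1; abel
                _ ≤ ‖v‖ + ‖v - (q - p)‖ := norm_sub_le _ _
              linarith
            have hvK : v ∈ KK := hKmem p' hp' q' hq' v hqv'.symm
              (lt_of_lt_of_le hvR (by linarith))
            have hv'K : q - p ∈ KK := hKmem p hp q hq _ rfl hvn'
            have heqvv : v = q - p := hηsep v hvK _ hv'K
              (by rw [dist_eq_norm]; linarith)
            exact mem_patch_iff.2 ⟨hvR, q, hq, heqvv.symm⟩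
        have hhp : h p = h p' := heqv p p' hpatch
        have hdist : dist w (φ p' - g b) ≤ e := by
          rw [dist_eq_norm, ← htw]
          have hident : φ p - g a - (φ p' - g b)
              = g (p - a - (p' - b)) + ((φ p - g p - h p) - (φ p' - g p' - h p') + (h p - h p')) := by
            simp only [map_sub]
            abel
          have hzero : h p - h p' = 0 := by rw [hhp, sub_self]
          rw [hident, hzero, add_zero]
          have hb1 : ‖g (p - a - (p' - b))‖ ≤ Cg * δ := by
            calc ‖g (p - a - (p' - b))‖ ≤ Cg * ‖p - a - (p' - b)‖ := hgle _
            _ ≤ Cg * δ := mul_le_mul_of_nonneg_left hpp'.le hCg0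
          calc ‖g (p - a - (p' - b)) + ((φ p - g p - h p) - (φ p' - g p' - h p'))‖
              ≤ ‖g (p - a - (p' - b))‖ + ‖(φ p - g p - h p) - (φ p' - g p' - h p')‖ :=
                norm_add_le _ _
          _ ≤ ‖g (p - a - (p' - b))‖ + (‖φ p - g p - h p‖ + ‖φ p' - g p' - h p'‖) := by
                linarith [norm_sub_le (φ p - g p - h p) (φ p' - g p' - h p')]
          _ ≤ e := by
                have := happ p
                have := happ p'
                linarith
        refine ⟨φ p' - g b, Or.inl ⟨?_, mem_shiftSet_iff.2 ⟨φ p', ⟨p', hp', rfl⟩, rfl⟩⟩, hdist⟩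
        apply mem_ball_zero_iff.2
        have h3 : ‖φ p' - g b‖ ≤ ‖w‖ + ‖w - (φ p' - g b)‖ := by
          calc ‖φ p' - g b‖ = ‖w - (w - (φ p' - g b))‖ := by congr 1; abel
          _ ≤ ‖w‖ + ‖w - (φ p' - g b)‖ := norm_sub_le _ _
        rw [dist_eq_norm] at hdist
        linarith
    have himg := Metric.hausdorffDist_le_of_mem_dist he.le (key x y hHD)
      (key y x (by rw [Metric.hausdorffDist_comm]; exact hHD))
    have hmem : e ∈ {ε' : ℝ | 0 < ε' ∧ Metric.hausdorffDist
        ((ball (0 : Euc n) (1 / ε') ∩ shiftSet (φ '' P) (g x)) ∪ sphere (0 : Euc n) (1 / ε'))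
        ((ball (0 : Euc n) (1 / ε') ∩ shiftSet (φ '' P) (g y)) ∪ sphere (0 : Euc n) (1 / ε')) ≤ ε'} :=
      ⟨he, himg⟩
    unfold patternDist
    calc sInf _ ≤ e := csInf_le ⟨0, fun t ht => ht.1.le⟩ hmem
    _ < ε := heε
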